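/- arXiv:2001.11006 — 2 statements merged into one kernel-verified Lean document; each statement's English description precedes it below -/
import Mathlib

section
/- If P is a height-(0,1) type-C poset whose relation graph RG(P) has connected components K₁,...,Kₙ, then ind g_C(P) = Σᵢ ind g_C(P_{Kᵢ}), where P_{Kᵢ} is the type-C poset induced by the elements corresponding to component Kᵢ. -/
/-- The underlying set `{-n,...,-1,1,...,n}` of a type-C poset, as a finset of integers. -/
noncomputable def Idx (n : ℕ) : Finset ℤ := (Finset.Icc (-(n : ℤ)) (n : ℤ)).erase 0

/-- The index type `{-n,...,-1,1,...,n}` for rows and columns of `2n × 2n` matrices. -/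
abbrev Iv (n : ℕ) := {i : ℤ // i ∈ Idx n}

/-- The matrix unit `E_{a,b}` with a `1` in entry `(a,b)` and `0` elsewhere, for rows and
columns indexed by `{-n,...,-1,1,...,n}`. -/
def EE (k : Type*) [Field k] (n : ℕ) (a b : ℤ) : Matrix (Iv n) (Iv n) k :=
  fun p q => if p.1 = a ∧ q.1 = b then 1 else 0

/-- A type-C poset: a poset on `{-n,...,-1,1,...,n}` such that `i ⪯ j` implies `i ≤ j`,
and for `i ≠ -j`, `i ⪯ j` iff `-j ⪯ -i`. -/
structure TypeCPoset (n : ℕ) where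
  le : ℤ → ℤ → Prop
  mem_of_le : ∀ i j, le i j → i ∈ Idx n ∧ j ∈ Idx n
  refl : ∀ i ∈ Idx n, le i i
  antisymm : ∀ i j, le i j → le j i → i = j
  trans : ∀ i j l, le i j → le j l → le i l
  le_int : ∀ i j, le i j → i ≤ j
  symm : ∀ i j, i ≠ -j → (le i j ↔ le (-j) (-i))

/-- The generating set (in fact a basis, together with spanning diagonal elements) of the
type-C Lie poset algebra determined by the order relation `le`, restricted to the pairs
`{-i, i}` with `i` in the set `S` of positive labels:
`{E_{-i,-i} - E_{i,i}} ∪ {E_{-i,-j} - E_{j,i} : -i ⪯ -j, j ⪯ i} ∪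
{E_{-i,j} + E_{-j,i} : -i ⪯ j, -j ⪯ i, i ≠ j} ∪ {E_{-i,i} : -i ⪯ i}`. -/
def gCgen (k : Type*) [Field k] (n : ℕ) (S : Set ℤ) (le : ℤ → ℤ → Prop) :
    Set (Matrix (Iv n) (Iv n) k) :=
  {M | (∃ i ∈ S, M = EE k n (-i) (-i) - EE k n i i) ∨
       (∃ i ∈ S, ∃ j ∈ S, le (-i) (-j) ∧ le j i ∧ M = EE k n (-i) (-j) - EE k n j i) ∨
       (∃ i ∈ S, ∃ j ∈ S, le (-i) j ∧ le (-j) i ∧ i ≠ j ∧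
          M = EE k n (-i) j + EE k n (-j) i) ∨
       (∃ i ∈ S, le (-i) i ∧ M = EE k n (-i) i)}

/-- The type-C Lie poset algebra `g_C(P)` (as a subspace of matrices, closed under the
commutator) determined by the order relation `le` and set `S` of positive labels. -/
noncomputable def gC (k : Type*) [Field k] (n : ℕ) (S : Set ℤ) (le : ℤ → ℤ → Prop) :
    Submodule k (Matrix (Iv n) (Iv n) k) :=
  Submodule.span k (gCgen k n S le)

/-- The kernel of the Kirillov form `B_F(x,y) = F (xy - yx)` on a subspace `W` of an
associative algebra `A` (with `W` closed under the commutator): the set of `x ∈ W` with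
`F (xy - yx) = 0` for all `y ∈ W`. -/
noncomputable def kerB {k A : Type*} [Field k] [Ring A] [Algebra k A]
    (W : Submodule k A) (F : A →ₗ[k] k) : Submodule k A :=
  W ⊓ ⨅ y ∈ W, LinearMap.ker (F ∘ₗ (LinearMap.mulRight k y - LinearMap.mulLeft k y))

/-- The index of a Lie algebra realized as a subspace `W` of an associative algebra,
closed under the commutator: the minimum over functionals `F` of the dimension of the
kernel of the Kirillov form `B_F`. -/
noncomputable def lieIndex {k A : Type*} [Field k] [Ring A] [Algebra k A]
    (W : Submodule k A) : ℕ :=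
  sInf {d : ℕ | ∃ F : A →ₗ[k] k, d = Module.finrank k (kerB W F)}

/-- The order relation `le` (on `{-n,...,-1,1,...,n}`) is of height `(0,1)`: the induced
poset on the positive elements is an antichain, every chain has at most two elements, and
some chain has exactly two elements. -/
def Height01 (le : ℤ → ℤ → Prop) : Prop :=
  (∀ i j : ℤ, 0 < i → 0 < j → le i j → i = j) ∧
  (∀ x y z : ℤ, le x y → le y z → x ≠ y → y ≠ z → False) ∧
  (∃ x y : ℤ, x ≠ y ∧ le x y)

/-- The adjacency relation of the relation graph `RG(P)`: vertices are the positive labels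
`i` (standing for the pairs `{-i, i}`), with `i` adjacent to `j` iff `-i ⪯ j`
(equivalently, by the type-C symmetry, `-j ⪯ i`); `-i ⪯ i` gives a self-loop at `i`. -/
def adjRG (le : ℤ → ℤ → Prop) (i j : ℤ) : Prop :=
  0 < i ∧ 0 < j ∧ (le (-i) j ∨ le (-j) i)

/-- The edge set of the relation graph `RG(P)`, as a set of unordered pairs. -/
def edgeRG (le : ℤ → ℤ → Prop) : Set (Sym2 ℤ) :=
  {e | ∃ i j, adjRG le i j ∧ e = s(i, j)}

/-- A closed walk of odd length in the graph with adjacency relation `adj`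
(self-loops give closed walks of length 1). -/
def OddClosedWalk {V : Type*} (adj : V → V → Prop) : Prop :=
  ∃ (m : ℕ) (w : ℕ → V), Odd m ∧ w m = w 0 ∧ ∀ i < m, adj (w i) (w (i + 1))

/-- The relation graph `RG(P)` is connected: any two vertices in `{1,...,n}` are joined by
a walk. -/
def ConnRG (n : ℕ) (le : ℤ → ℤ → Prop) : Prop :=
  ∀ i ∈ Finset.Icc (1 : ℤ) (n : ℤ), ∀ j ∈ Finset.Icc (1 : ℤ) (n : ℤ),
    Relation.ReflTransGen (adjRG le) i j


/-! ### Auxiliary machinery for `stmt11` -/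

section StmtElevenAux

open Module

variable {k : Type*} [Field k] {n : ℕ}

/-- Matrices supported on rows/columns whose absolute value lies in `T`. -/
def Msupp (k : Type*) [Field k] (n : ℕ) (T : Set ℤ) :
    Submodule k (Matrix (Iv n) (Iv n) k) where
  carrier := {M | ∀ p q : Iv n, M p q ≠ 0 → |p.1| ∈ T ∧ |q.1| ∈ T}
  add_mem' := by
    intro a b ha hb p q h
    by_cases h1 : a p q = 0
    · exact hb p q (by simpa [Matrix.add_apply, h1] using h)
    · exact ha p q h1
  zero_mem' := by intro p q h; simp [Matrix.zero_apply] at h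
  smul_mem' := by
    intro c a ha p q h
    exact ha p q (fun h0 => by simp [Matrix.smul_apply, h0] at h)

lemma Msupp_mono {T U : Set ℤ} (h : T ⊆ U) : Msupp k n T ≤ Msupp k n U := by
  intro x hx p q hpq
  exact ⟨h (hx p q hpq).1, h (hx p q hpq).2⟩

lemma Msupp_mul {T : Set ℤ} {x y : Matrix (Iv n) (Iv n) k}
    (hx : x ∈ Msupp k n T) (hy : y ∈ Msupp k n T) : x * y ∈ Msupp k n T := by
  intro p q h
  rw [Matrix.mul_apply] at h
  obtain ⟨r, -, hr⟩ := Finset.exists_ne_zero_of_sum_ne_zero h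
  exact ⟨(hx p r (left_ne_zero_of_mul hr)).1, (hy r q (right_ne_zero_of_mul hr)).2⟩

lemma Msupp_mul_eq_zero {T U : Set ℤ} (hTU : ∀ i, i ∈ T → i ∈ U → False)
    {x y : Matrix (Iv n) (Iv n) k}
    (hx : x ∈ Msupp k n T) (hy : y ∈ Msupp k n U) : x * y = 0 := by
  ext p q
  rw [Matrix.mul_apply, Matrix.zero_apply]
  refine Finset.sum_eq_zero fun r _ => ?_
  by_cases h : x p r = 0
  · simp [h]
  by_cases h2 : y r q = 0
  · simp [h2]
  exact absurd ((hy r q h2).1) (fun hu => hTU _ (hx p r h).2 hu)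

lemma Msupp_inf_eq_bot {T U : Set ℤ} (hTU : ∀ i, i ∈ T → i ∈ U → False) :
    Msupp k n T ⊓ Msupp k n U = (⊥ : Submodule k (Matrix (Iv n) (Iv n) k)) := by
  refine le_antisymm ?_ bot_le
  rintro x ⟨hx1, hx2⟩
  rw [Submodule.mem_bot]
  ext p q
  rw [Matrix.zero_apply]
  by_contra h
  exact hTU _ ((hx1 p q h).1) ((hx2 p q h).1)

lemma mem_kerB {A : Type*} [Ring A] [Algebra k A] {W : Submodule k A} {F : A →ₗ[k] k}
    {x : A} : x ∈ kerB W F ↔ x ∈ W ∧ ∀ y ∈ W, F (x * y - y * x) = 0 := by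
  simp only [kerB, Submodule.mem_inf, Submodule.mem_iInf, LinearMap.mem_ker,
    LinearMap.comp_apply, LinearMap.sub_apply, LinearMap.mulRight_apply,
    LinearMap.mulLeft_apply]


lemma kerB_iSup {k : Type*} [Field k] {A : Type*} [Ring A] [Algebra k A]
    {ι : Type*} [Fintype ι] (W : ι → Submodule k A)
    (hmul : ∀ a b, a ≠ b → ∀ x ∈ W a, ∀ y ∈ W b, x * y = 0)
    (F : A →ₗ[k] k) :
    kerB (⨆ a, W a) F = ⨆ a, kerB (W a) F := by
  apply le_antisymm
  · intro x hx
    rw [mem_kerB] at hx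
    obtain ⟨hxW, hxk⟩ := hx
    rw [Submodule.mem_iSup_iff_exists_finsupp] at hxW
    obtain ⟨g, hg, hsum⟩ := hxW
    have hxsum : x = ∑ a, g a := by
      rw [← hsum, Finsupp.sum_fintype]
      intro a; rfl
    have key : ∀ b, ∀ y ∈ W b, x * y - y * x = g b * y - y * g b := by
      intro b y hy
      rw [hxsum, Finset.sum_mul, Finset.mul_sum]
      rw [Finset.sum_eq_single b (fun c _ hc => hmul c b hc _ (hg c) y hy)
        (fun h => absurd (Finset.mem_univ b) h),
        Finset.sum_eq_single b (fun c _ hc => hmul b c (Ne.symm hc) y hy _ (hg c))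
        (fun h => absurd (Finset.mem_univ b) h)]
    rw [hxsum]
    refine Submodule.sum_mem _ fun a _ => Submodule.mem_iSup_of_mem a ?_
    rw [mem_kerB]
    refine ⟨hg a, fun y hy => ?_⟩
    rw [← key a y hy]
    exact hxk y (Submodule.mem_iSup_of_mem a hy)
  · refine iSup_le fun a x hx => ?_
    rw [mem_kerB] at hx ⊢
    refine ⟨Submodule.mem_iSup_of_mem a hx.1, fun y hy => ?_⟩
    have hker : (⨆ b, W b) ≤
        LinearMap.ker (F ∘ₗ (LinearMap.mulLeft k x - LinearMap.mulRight k x)) := by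
      refine iSup_le fun b z hz => ?_
      rw [LinearMap.mem_ker, LinearMap.comp_apply, LinearMap.sub_apply,
        LinearMap.mulLeft_apply, LinearMap.mulRight_apply]
      by_cases hab : a = b
      · subst hab; exact hx.2 z hz
      · rw [hmul a b hab x hx.1 z hz, hmul b a (Ne.symm hab) z hz x hx.1]
        simp
    have := hker hy
    rw [LinearMap.mem_ker, LinearMap.comp_apply, LinearMap.sub_apply,
      LinearMap.mulLeft_apply, LinearMap.mulRight_apply] at this
    exact this

lemma finrank_sup_eq_sum {k : Type*} [Field k] {n : ℕ} {ι : Type*} [DecidableEq ι]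
    (s : Finset ι) (V : ι → Submodule k (Matrix (Iv n) (Iv n) k)) (T : ι → Set ℤ)
    (hV : ∀ a, V a ≤ Msupp k n (T a))
    (hdisj : ∀ a b, a ≠ b → ∀ i, i ∈ T a → i ∈ T b → False) :
    Module.finrank k (s.sup V : Submodule k _) = ∑ a ∈ s, Module.finrank k (V a) := by
  classical
  induction s using Finset.induction with
  | empty => simp
  | @insert a s ha ih =>
    rw [Finset.sup_insert, Finset.sum_insert ha, ← ih]
    have hsub : s.sup V ≤ Msupp k n (⋃ b ∈ s, T b) :=
      Finset.sup_le fun b hb =>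
        (hV b).trans (Msupp_mono (fun i hi => Set.mem_biUnion hb hi))
    have hinf : V a ⊓ s.sup V = ⊥ := by
      refine le_antisymm (le_trans (inf_le_inf (hV a) hsub) ?_) bot_le
      rw [Msupp_inf_eq_bot]
      intro i hi hiU
      simp only [Set.mem_iUnion, exists_prop] at hiU
      obtain ⟨b, hb, hib⟩ := hiU
      exact hdisj a b (by rintro rfl; exact ha hb) i hi hib
    have h2 := Submodule.finrank_sup_add_finrank_inf_eq (V a) (s.sup V)
    rw [hinf, finrank_bot, add_zero] at h2
    exact h2


open scoped Classical in
/-- The linear projection keeping only matrix entries whose row/column labels have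
absolute value in `T`. -/
noncomputable def maskL (k : Type*) [Field k] (n : ℕ) (T : Set ℤ) :
    Matrix (Iv n) (Iv n) k →ₗ[k] Matrix (Iv n) (Iv n) k where
  toFun M := fun p q => if |p.1| ∈ T ∧ |q.1| ∈ T then M p q else 0
  map_add' := by
    intro M N
    ext p q
    show _ = (if |p.1| ∈ T ∧ |q.1| ∈ T then M p q else 0) + (if |p.1| ∈ T ∧ |q.1| ∈ T then N p q else 0)
    by_cases h : |p.1| ∈ T ∧ |q.1| ∈ T <;> simp [h]
  map_smul' := by
    intro c M
    ext p q
    show _ = c * (if |p.1| ∈ T ∧ |q.1| ∈ T then M p q else 0)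
    by_cases h : |p.1| ∈ T ∧ |q.1| ∈ T <;> simp [h]

lemma maskL_of_mem {T : Set ℤ} {z : Matrix (Iv n) (Iv n) k} (hz : z ∈ Msupp k n T) :
    maskL k n T z = z := by
  ext p q
  simp only [maskL, LinearMap.coe_mk, AddHom.coe_mk]
  classical
  show (if _ then _ else _) = _
  split
  · rfl
  · rename_i h
    by_contra hne
    exact h (hz p q fun h0 => hne h0.symm)

lemma maskL_of_disjoint {T U : Set ℤ} (hTU : ∀ i, i ∈ T → i ∈ U → False)
    {z : Matrix (Iv n) (Iv n) k} (hz : z ∈ Msupp k n T) :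
    maskL k n U z = 0 := by
  ext p q
  simp only [maskL, LinearMap.coe_mk, AddHom.coe_mk, Matrix.zero_apply]
  classical
  show (if _ then _ else _) = _
  split
  · rename_i h
    by_contra h0
    exact hTU _ (hz p q h0).1 h.1
  · rfl

lemma EE_mem_Msupp {T : Set ℤ} {a b : ℤ} (ha : |a| ∈ T) (hb : |b| ∈ T) :
    EE k n a b ∈ Msupp k n T := by
  intro p q h
  rw [EE] at h
  split at h
  · rename_i hpq
    rw [hpq.1, hpq.2]
    exact ⟨ha, hb⟩
  · exact absurd rfl h

lemma gCgen_mono {S T : Set ℤ} (h : S ⊆ T) (le : ℤ → ℤ → Prop) :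
    gCgen k n S le ⊆ gCgen k n T le := by
  rintro M (⟨i, hi, rfl⟩ | ⟨i, hi, j, hj, h1, h2, rfl⟩ |
    ⟨i, hi, j, hj, h1, h2, h3, rfl⟩ | ⟨i, hi, h1, rfl⟩)
  · exact Or.inl ⟨i, h hi, rfl⟩
  · exact Or.inr (Or.inl ⟨i, h hi, j, h hj, h1, h2, rfl⟩)
  · exact Or.inr (Or.inr (Or.inl ⟨i, h hi, j, h hj, h1, h2, h3, rfl⟩))
  · exact Or.inr (Or.inr (Or.inr ⟨i, h hi, h1, rfl⟩))

end StmtElevenAux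

/-- If `P` is a height-`(0,1)` type-C poset whose relation graph `RG(P)` has
connected components `K₁,...,Kₘ` (here presented by a system `f : ι → ℤ` of
representatives, one per component), then `ind g_C(P) = Σᵢ ind g_C(P_{Kᵢ})`, where
`P_{Kᵢ}` is the poset induced by the elements corresponding to component `Kᵢ`. -/
theorem stmt11 (k : Type*) [Field k] (n : ℕ) (P : TypeCPoset n)
    (h01 : Height01 P.le)
    (ι : Type*) [Fintype ι] (f : ι → ℤ)
    (hf : ∀ a, f a ∈ Finset.Icc (1 : ℤ) (n : ℤ))
    (hdistinct : ∀ a b : ι, Relation.ReflTransGen (adjRG P.le) (f a) (f b) → a = b)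
    (hcover : ∀ i ∈ Finset.Icc (1 : ℤ) (n : ℤ), ∃ a, Relation.ReflTransGen (adjRG P.le) (f a) i) :
    lieIndex (gC k n (Set.Icc (1 : ℤ) (n : ℤ)) P.le) =
      ∑ a : ι, lieIndex (gC k n
        {i : ℤ | i ∈ Finset.Icc (1 : ℤ) (n : ℤ) ∧
          Relation.ReflTransGen (adjRG P.le) (f a) i} P.le) := by
  classical
  set K : ι → Set ℤ := fun a =>
    {i : ℤ | i ∈ Finset.Icc (1 : ℤ) (n : ℤ) ∧
      Relation.ReflTransGen (adjRG P.le) (f a) i} with hK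
  set W : ι → Submodule k (Matrix (Iv n) (Iv n) k) := fun a => gC k n (K a) P.le with hW
  -- basic positivity facts
  have hKpos : ∀ a, ∀ i ∈ K a, (0 : ℤ) < i := fun a i hi =>
    lt_of_lt_of_le one_pos (Finset.mem_Icc.mp hi.1).1
  have hSpos : ∀ i ∈ Set.Icc (1 : ℤ) (n : ℤ), (0 : ℤ) < i := fun i hi =>
    lt_of_lt_of_le one_pos hi.1
  have habs : ∀ i : ℤ, 0 < i → |(-i)| = i ∧ |i| = i := fun i hi =>
    ⟨by rw [abs_neg, abs_of_pos hi], abs_of_pos hi⟩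
  -- the relation graph adjacency is symmetric
  have hadj_symm : Symmetric (adjRG P.le) := fun i j ⟨h1, h2, h3⟩ => ⟨h2, h1, h3.symm⟩
  -- the components are pairwise disjoint
  have hKdisj : ∀ a b, a ≠ b → ∀ i, i ∈ K a → i ∈ K b → False := by
    intro a b hab i hia hib
    exact hab (hdistinct a b (hia.2.trans (by haveI : Std.Symm (adjRG P.le) := ⟨fun a b h => hadj_symm h⟩; exact Std.Symm.symm _ _ hib.2)))
  -- each component algebra is supported on its component
  have hWsupp : ∀ a, W a ≤ Msupp k n (K a) := by
    intro a
    rw [hW]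
    refine Submodule.span_le.mpr ?_
    rintro M (⟨i, hi, rfl⟩ | ⟨i, hi, j, hj, h1, h2, rfl⟩ |
      ⟨i, hi, j, hj, h1, h2, h3, rfl⟩ | ⟨i, hi, h1, rfl⟩)
    · exact sub_mem
        (EE_mem_Msupp (by rw [(habs i (hKpos a i hi)).1]; exact hi)
          (by rw [(habs i (hKpos a i hi)).1]; exact hi))
        (EE_mem_Msupp (by rw [(habs i (hKpos a i hi)).2]; exact hi)
          (by rw [(habs i (hKpos a i hi)).2]; exact hi))
    · exact sub_mem
        (EE_mem_Msupp (by rw [(habs i (hKpos a i hi)).1]; exact hi)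
          (by rw [(habs j (hKpos a j hj)).1]; exact hj))
        (EE_mem_Msupp (by rw [(habs j (hKpos a j hj)).2]; exact hj)
          (by rw [(habs i (hKpos a i hi)).2]; exact hi))
    · exact add_mem
        (EE_mem_Msupp (by rw [(habs i (hKpos a i hi)).1]; exact hi)
          (by rw [(habs j (hKpos a j hj)).2]; exact hj))
        (EE_mem_Msupp (by rw [(habs j (hKpos a j hj)).1]; exact hj)
          (by rw [(habs i (hKpos a i hi)).2]; exact hi))
    · exact EE_mem_Msupp (by rw [(habs i (hKpos a i hi)).1]; exact hi)
        (by rw [(habs i (hKpos a i hi)).2]; exact hi)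
  -- products across different components vanish
  have hmul : ∀ a b, a ≠ b → ∀ x ∈ W a, ∀ y ∈ W b, x * y = 0 := fun a b hab x hx y hy =>
    Msupp_mul_eq_zero (hKdisj a b hab) (hWsupp a hx) (hWsupp b hy)
  -- the whole algebra is the (internal) direct sum of the component algebras
  have hdecomp : gC k n (Set.Icc (1 : ℤ) (n : ℤ)) P.le = ⨆ a, W a := by
    apply le_antisymm
    · refine Submodule.span_le.mpr ?_
      rintro M (⟨i, hi, rfl⟩ | ⟨i, hi, j, hj, h1, h2, rfl⟩ |
        ⟨i, hi, j, hj, h1, h2, h3, rfl⟩ | ⟨i, hi, h1, rfl⟩)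
      · obtain ⟨a, ha⟩ := hcover i (Finset.mem_Icc.mpr ⟨hi.1, hi.2⟩)
        exact Submodule.mem_iSup_of_mem a (Submodule.subset_span
          (Or.inl ⟨i, ⟨Finset.mem_Icc.mpr ⟨hi.1, hi.2⟩, ha⟩, rfl⟩))
      · have hji : j = i := h01.1 j i (hSpos j hj) (hSpos i hi) h2
        subst hji
        obtain ⟨a, ha⟩ := hcover j (Finset.mem_Icc.mpr ⟨hj.1, hj.2⟩)
        exact Submodule.mem_iSup_of_mem a (Submodule.subset_span
          (Or.inr (Or.inl ⟨j, ⟨Finset.mem_Icc.mpr ⟨hj.1, hj.2⟩, ha⟩,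
            j, ⟨Finset.mem_Icc.mpr ⟨hj.1, hj.2⟩, ha⟩, h1, h2, rfl⟩)))
      · obtain ⟨a, ha⟩ := hcover i (Finset.mem_Icc.mpr ⟨hi.1, hi.2⟩)
        have haj : Relation.ReflTransGen (adjRG P.le) (f a) j :=
          ha.tail ⟨hSpos i hi, hSpos j hj, Or.inl h1⟩
        exact Submodule.mem_iSup_of_mem a (Submodule.subset_span
          (Or.inr (Or.inr (Or.inl ⟨i, ⟨Finset.mem_Icc.mpr ⟨hi.1, hi.2⟩, ha⟩,
            j, ⟨Finset.mem_Icc.mpr ⟨hj.1, hj.2⟩, haj⟩, h1, h2, h3, rfl⟩))))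
      · obtain ⟨a, ha⟩ := hcover i (Finset.mem_Icc.mpr ⟨hi.1, hi.2⟩)
        exact Submodule.mem_iSup_of_mem a (Submodule.subset_span
          (Or.inr (Or.inr (Or.inr ⟨i, ⟨Finset.mem_Icc.mpr ⟨hi.1, hi.2⟩, ha⟩, h1, rfl⟩))))
    · refine iSup_le fun a => Submodule.span_mono (gCgen_mono ?_ P.le)
      intro i hi
      have := Finset.mem_Icc.mp hi.1
      exact ⟨this.1, this.2⟩
  -- the Kirillov-form kernels decompose accordingly, for every functional
  have hker : ∀ F : Matrix (Iv n) (Iv n) k →ₗ[k] k,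
      Module.finrank k (kerB (gC k n (Set.Icc (1 : ℤ) (n : ℤ)) P.le) F) =
        ∑ a, Module.finrank k (kerB (W a) F) := by
    intro F
    rw [hdecomp, kerB_iSup W hmul F, ← Finset.sup_univ_eq_iSup]
    exact finrank_sup_eq_sum Finset.univ (fun a => kerB (W a) F) K
      (fun a => le_trans inf_le_left (hWsupp a)) hKdisj
  -- nonemptiness of the index sets
  have hne : ∀ V : Submodule k (Matrix (Iv n) (Iv n) k),
      {d : ℕ | ∃ F : Matrix (Iv n) (Iv n) k →ₗ[k] k,
        d = Module.finrank k (kerB V F)}.Nonempty := fun V => ⟨_, 0, rfl⟩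
  -- choose optimal functionals for each component
  have hFa : ∀ a, ∃ F : Matrix (Iv n) (Iv n) k →ₗ[k] k,
      lieIndex (W a) = Module.finrank k (kerB (W a) F) := fun a => Nat.sInf_mem (hne (W a))
  choose Fa hFaspec using hFa
  -- patch them together
  set F : Matrix (Iv n) (Iv n) k →ₗ[k] k := ∑ a, (Fa a) ∘ₗ maskL k n (K a) with hF
  have hFagree : ∀ a, ∀ z ∈ Msupp k n (K a), F z = Fa a z := by
    intro a z hz
    rw [hF, LinearMap.sum_apply]
    rw [Finset.sum_eq_single a]
    · rw [LinearMap.comp_apply, maskL_of_mem hz]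
    · intro b _ hb
      rw [LinearMap.comp_apply, maskL_of_disjoint (hKdisj a b (Ne.symm hb)) hz, map_zero]
    · intro h
      exact absurd (Finset.mem_univ a) h
  have hkerFa : ∀ a, kerB (W a) F = kerB (W a) (Fa a) := by
    intro a
    ext x
    rw [mem_kerB, mem_kerB]
    refine and_congr_right fun hx => ?_
    refine forall₂_congr fun y hy => ?_
    have hz : x * y - y * x ∈ Msupp k n (K a) :=
      sub_mem (Msupp_mul (hWsupp a hx) (hWsupp a hy))
        (Msupp_mul (hWsupp a hy) (hWsupp a hx))
    rw [hFagree a _ hz]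
  -- conclude by a two-sided estimate
  apply le_antisymm
  · calc lieIndex (gC k n (Set.Icc (1 : ℤ) (n : ℤ)) P.le)
        ≤ Module.finrank k (kerB (gC k n (Set.Icc (1 : ℤ) (n : ℤ)) P.le) F) :=
          Nat.sInf_le ⟨F, rfl⟩
      _ = ∑ a, Module.finrank k (kerB (W a) F) := hker F
      _ = ∑ a, lieIndex (W a) := by
          refine Finset.sum_congr rfl fun a _ => ?_
          rw [hkerFa a, ← hFaspec a]
  · obtain ⟨F0, hF0⟩ := Nat.sInf_mem (hne (gC k n (Set.Icc (1 : ℤ) (n : ℤ)) P.le))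
    calc ∑ a, lieIndex (W a)
        ≤ ∑ a, Module.finrank k (kerB (W a) F0) :=
          Finset.sum_le_sum fun a _ => Nat.sInf_le ⟨F0, rfl⟩
      _ = Module.finrank k (kerB (gC k n (Set.Icc (1 : ℤ) (n : ℤ)) P.le) F0) := (hker F0).symm
      _ = lieIndex (gC k n (Set.Icc (1 : ℤ) (n : ℤ)) P.le) := hF0.symm
end

section
/- If P is a Frobenius, height-(0,1) type-C poset, then the functional F_P = Σ_{-i ⪯ j, i < j} E*_{-i,j} + Σ_{-i ⪯ i} E*_{-i,i} is a Frobenius functional on g_C(P); that is, the Kirillov form B_{F_P}(x,y) = F_P([x,y]) is nondegenerate on g_C(P). -/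
section Aux1
variable {k : Type*} [Field k] {n : ℕ}
lemma mem_Idx_iff {n : ℕ} {i : ℤ} : i ∈ Idx n ↔ i ≠ 0 ∧ -(n:ℤ) ≤ i ∧ i ≤ n := by
  simp [Idx, Finset.mem_erase, Finset.mem_Icc, and_assoc]
lemma neg_mem_Idx {n : ℕ} {i : ℤ} (h : i ∈ Idx n) : -i ∈ Idx n := by
  rw [mem_Idx_iff] at h ⊢; omega
def nIv {n : ℕ} (p : Iv n) : Iv n := ⟨-p.1, neg_mem_Idx p.2⟩
structure Shape (n : ℕ) (le : ℤ → ℤ → Prop) {k : Type*} [Field k]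
    (x : Matrix (Iv n) (Iv n) k) : Prop where
  nle : ∀ p q : Iv n, ¬ le p.1 q.1 → x p q = 0
  diag : ∀ p : Iv n, 0 < p.1 → x p p = - x (nIv p) (nIv p)
  symm2 : ∀ p q : Iv n, p.1 < 0 → 0 < q.1 → p.1 ≠ -q.1 → x p q = x (nIv q) (nIv p)
variable {P : TypeCPoset n}
lemma posle (h01 : Height01 P.le) {i j : ℤ} (hi : 0 < i) (h : P.le i j) : i = j :=
  h01.1 i j hi (lt_of_lt_of_le hi (P.le_int i j h)) h
lemma negle (h01 : Height01 P.le) {i j : ℤ} (hj : j < 0) (h : P.le i j) : i = j := by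
  have hij := P.le_int i j h
  have h2 := (P.symm i j (by omega)).mp h
  have := h01.1 (-j) (-i) (by omega) (by omega) h2
  omega
lemma le_sign (h01 : Height01 P.le) {i j : ℤ} (h : P.le i j) (hne : i ≠ j) :
    i < 0 ∧ 0 < j := by
  have hij := P.le_int i j h
  have hi := (P.mem_of_le i j h).1
  have hj := (P.mem_of_le i j h).2
  rw [mem_Idx_iff] at hi hj
  constructor
  · by_contra hc; exact hne (posle h01 (by omega) h)
  · by_contra hc; exact hne (negle h01 (by omega) h)
lemma shape_zero {le : ℤ → ℤ → Prop} : Shape n le (0 : Matrix (Iv n) (Iv n) k) :=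
  ⟨by simp, by simp, by simp⟩
lemma Shape.add {le : ℤ → ℤ → Prop} {x y : Matrix (Iv n) (Iv n) k}
    (hx : Shape n le x) (hy : Shape n le y) : Shape n le (x + y) := by
  refine ⟨fun p q h => ?_, fun p h => ?_, fun p q h1 h2 h3 => ?_⟩
  · simp [Matrix.add_apply, hx.nle p q h, hy.nle p q h]
  · simp [Matrix.add_apply, hx.diag p h, hy.diag p h]; ring
  · simp [Matrix.add_apply, hx.symm2 p q h1 h2 h3, hy.symm2 p q h1 h2 h3]
lemma Shape.smul {le : ℤ → ℤ → Prop} {x : Matrix (Iv n) (Iv n) k} (c : k)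
    (hx : Shape n le x) : Shape n le (c • x) := by
  refine ⟨fun p q h => ?_, fun p h => ?_, fun p q h1 h2 h3 => ?_⟩
  · simp [Matrix.smul_apply, hx.nle p q h]
  · simp [Matrix.smul_apply, hx.diag p h]
  · simp [Matrix.smul_apply, hx.symm2 p q h1 h2 h3]
end Aux1

section Aux2
variable {k : Type*} [Field k] {n : ℕ} {P : TypeCPoset n}

lemma shape_D {i : ℤ} (hi : i ∈ Idx n) (hi0 : 0 < i) :
    Shape n P.le (EE k n (-i) (-i) - EE k n i i) := by
  refine ⟨fun p q h => ?_, fun p h => ?_, fun p q h1 h2 h3 => ?_⟩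
  · simp only [Matrix.sub_apply, EE]
    split_ifs with h1 h2 h2
    · ring
    · exfalso; apply h
      rw [show q.1 = p.1 by omega]
      exact P.refl p.1 p.2
    · exfalso; apply h
      rw [show q.1 = p.1 by omega]
      exact P.refl p.1 p.2
    · ring
  · simp only [Matrix.sub_apply, EE, nIv]
    split_ifs <;> first | ring1 | (exfalso; omega)
  · simp only [Matrix.sub_apply, EE, nIv]
    split_ifs <;> first | ring1 | (exfalso; omega)

lemma shape_X {a b : ℤ} (ha0 : 0 < a) (hb0 : 0 < b)
    (hab : P.le (-a) b) (hba : P.le (-b) a) :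
    Shape n P.le (EE k n (-a) b + EE k n (-b) a) := by
  refine ⟨fun p q h => ?_, fun p h => ?_, fun p q h1 h2 h3 => ?_⟩
  · simp only [Matrix.add_apply, EE]
    split_ifs with h1 h2 h2
    · exfalso; apply h; rw [h1.1, h1.2]; exact hab
    · exfalso; apply h; rw [h1.1, h1.2]; exact hab
    · exfalso; apply h; rw [h2.1, h2.2]; exact hba
    · ring
  · simp only [Matrix.add_apply, EE, nIv]
    split_ifs <;> first | ring1 | (exfalso; omega)
  · simp only [Matrix.add_apply, EE, nIv]
    split_ifs <;> first | ring1 | (exfalso; omega)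

lemma shape_Y {a : ℤ} (ha0 : 0 < a) (hle : P.le (-a) a) :
    Shape n P.le (EE k n (-a) a) := by
  refine ⟨fun p q h => ?_, fun p h => ?_, fun p q h1 h2 h3 => ?_⟩
  · simp only [EE]
    split_ifs with h1
    · exfalso; apply h; rw [h1.1, h1.2]; exact hle
    · rfl
  · simp only [EE, nIv]
    split_ifs <;> first | ring1 | (exfalso; omega) | simp_all
  · simp only [EE, nIv]
    split_ifs <;> first | ring1 | (exfalso; omega) | simp_all

lemma shape_of_mem (h01 : Height01 P.le) {x : Matrix (Iv n) (Iv n) k}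
    (hx : x ∈ gC k n (Set.Icc (1:ℤ) (n:ℤ)) P.le) : Shape n P.le x := by
  refine Submodule.span_induction ?_ shape_zero
    (fun a b _ _ ha hb => ha.add hb) (fun c a _ ha => ha.smul c) hx
  rintro M (⟨i, hi, rfl⟩ | ⟨i, hi, j, hj, hle1, hle2, rfl⟩ |
    ⟨i, hi, j, hj, hle1, hle2, hne, rfl⟩ | ⟨i, hi, hle, rfl⟩)
  · exact shape_D (mem_Idx_iff.mpr (by rcases hi with ⟨h1, h2⟩; omega)) (by rcases hi with ⟨h1, h2⟩; omega)
  · obtain rfl : j = i := posle h01 (by rcases hj with ⟨h1, h2⟩; omega) hle2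
    exact shape_D (mem_Idx_iff.mpr (by rcases hi with ⟨h1, h2⟩; omega)) (by rcases hi with ⟨h1, h2⟩; omega)
  · exact shape_X (by rcases hi with ⟨h1, h2⟩; omega) (by rcases hj with ⟨h1, h2⟩; omega) hle1 hle2
  · exact shape_Y (by rcases hi with ⟨h1, h2⟩; omega) hle
end Aux2

section Aux3
variable {k : Type*} [Field k] {n : ℕ} {P : TypeCPoset n}

lemma Shape.col_neg (h01 : Height01 P.le) {x : Matrix (Iv n) (Iv n) k} (hx : Shape n P.le x)
    {a : ℤ} (ha : a ∈ Idx n) (ha0 : 0 < a) (p : Iv n) :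
    x p ⟨-a, neg_mem_Idx ha⟩ =
      if p.1 = -a then x ⟨-a, neg_mem_Idx ha⟩ ⟨-a, neg_mem_Idx ha⟩ else 0 := by
  split_ifs with h
  · rw [show p = (⟨-a, neg_mem_Idx ha⟩ : Iv n) from Subtype.ext h]
  · exact hx.nle _ _ fun hle => h (negle h01 (by omega) hle)

lemma Shape.row_pos (h01 : Height01 P.le) {x : Matrix (Iv n) (Iv n) k} (hx : Shape n P.le x)
    {a : ℤ} (ha : a ∈ Idx n) (ha0 : 0 < a) (q : Iv n) :
    x ⟨a, ha⟩ q = if q.1 = a then x ⟨a, ha⟩ ⟨a, ha⟩ else 0 := by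
  split_ifs with h
  · rw [show q = (⟨a, ha⟩ : Iv n) from Subtype.ext h]
  · exact hx.nle _ _ fun hle => h (posle h01 ha0 hle).symm

lemma mul_EE_apply (x : Matrix (Iv n) (Iv n) k) {a : ℤ} (ha : a ∈ Idx n) (b : ℤ) (p q : Iv n) :
    (x * EE k n a b) p q = if q.1 = b then x p ⟨a, ha⟩ else 0 := by
  rw [Matrix.mul_apply]
  rw [Finset.sum_eq_single (⟨a, ha⟩ : Iv n)]
  · simp [EE, mul_ite, mul_one, mul_zero]
  · intro r _ hr
    have hra : r.1 ≠ a := fun hh => hr (Subtype.ext hh)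
    simp [EE, hra]
  · intro hmem; exact absurd (Finset.mem_univ _) hmem

lemma EE_mul_apply (x : Matrix (Iv n) (Iv n) k) (a : ℤ) {b : ℤ} (hb : b ∈ Idx n) (p q : Iv n) :
    (EE k n a b * x) p q = if p.1 = a then x ⟨b, hb⟩ q else 0 := by
  rw [Matrix.mul_apply]
  rw [Finset.sum_eq_single (⟨b, hb⟩ : Iv n)]
  · simp [EE, ite_mul, one_mul, zero_mul]
  · intro r _ hr
    have hrb : r.1 ≠ b := fun hh => hr (Subtype.ext hh)
    simp [EE, hrb]
  · intro hmem; exact absurd (Finset.mem_univ _) hmem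

lemma bracket_X_eq (h01 : Height01 P.le) {x : Matrix (Iv n) (Iv n) k} (hx : Shape n P.le x)
    {a b : ℤ} (ha : a ∈ Idx n) (hb : b ∈ Idx n) (ha0 : 0 < a) (hb0 : 0 < b) (hab : a ≠ b) :
    x * (EE k n (-a) b + EE k n (-b) a) - (EE k n (-a) b + EE k n (-b) a) * x =
      (x ⟨-a, neg_mem_Idx ha⟩ ⟨-a, neg_mem_Idx ha⟩ + x ⟨-b, neg_mem_Idx hb⟩ ⟨-b, neg_mem_Idx hb⟩) •
        (EE k n (-a) b + EE k n (-b) a) := by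
  have hdiaga : x ⟨a, ha⟩ ⟨a, ha⟩ = - x ⟨-a, neg_mem_Idx ha⟩ ⟨-a, neg_mem_Idx ha⟩ :=
    hx.diag ⟨a, ha⟩ ha0
  have hdiagb : x ⟨b, hb⟩ ⟨b, hb⟩ = - x ⟨-b, neg_mem_Idx hb⟩ ⟨-b, neg_mem_Idx hb⟩ :=
    hx.diag ⟨b, hb⟩ hb0
  rw [mul_add, add_mul]
  ext p q
  rw [Matrix.sub_apply, Matrix.add_apply, Matrix.add_apply,
    mul_EE_apply x (neg_mem_Idx ha) b p q, mul_EE_apply x (neg_mem_Idx hb) a p q,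
    EE_mul_apply x (-a) hb p q, EE_mul_apply x (-b) ha p q,
    hx.col_neg h01 ha ha0 p, hx.col_neg h01 hb hb0 p,
    hx.row_pos h01 hb hb0 q, hx.row_pos h01 ha ha0 q,
    hdiaga, hdiagb, Matrix.smul_apply, Matrix.add_apply]
  simp only [EE, smul_eq_mul]
  split_ifs <;> (first | ring1 | (exfalso; omega) | simp_all)

lemma bracket_Y_eq (h01 : Height01 P.le) {x : Matrix (Iv n) (Iv n) k} (hx : Shape n P.le x)
    {a : ℤ} (ha : a ∈ Idx n) (ha0 : 0 < a) :
    x * EE k n (-a) a - EE k n (-a) a * x =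
      (x ⟨-a, neg_mem_Idx ha⟩ ⟨-a, neg_mem_Idx ha⟩ + x ⟨-a, neg_mem_Idx ha⟩ ⟨-a, neg_mem_Idx ha⟩) •
        EE k n (-a) a := by
  have hdiaga : x ⟨a, ha⟩ ⟨a, ha⟩ = - x ⟨-a, neg_mem_Idx ha⟩ ⟨-a, neg_mem_Idx ha⟩ :=
    hx.diag ⟨a, ha⟩ ha0
  ext p q
  rw [Matrix.sub_apply, mul_EE_apply x (neg_mem_Idx ha) a p q, EE_mul_apply x (-a) ha p q,
    hx.col_neg h01 ha ha0 p, hx.row_pos h01 ha ha0 q, hdiaga, Matrix.smul_apply]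
  simp only [EE, smul_eq_mul]
  split_ifs <;> (first | ring1 | (exfalso; omega) | simp_all)

lemma diag_bracket_apply (x z : Matrix (Iv n) (Iv n) k)
    (hz : ∀ p q : Iv n, p ≠ q → z p q = 0) (p q : Iv n) :
    (x * z - z * x) p q = x p q * (z q q - z p p) := by
  rw [Matrix.sub_apply, Matrix.mul_apply, Matrix.mul_apply]
  rw [Finset.sum_eq_single q (fun r _ hr => by rw [hz r q hr, mul_zero])
    (fun hm => absurd (Finset.mem_univ _) hm)]
  rw [Finset.sum_eq_single p (fun r _ hr => by rw [hz p r (Ne.symm hr), zero_mul])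
    (fun hm => absurd (Finset.mem_univ _) hm)]
  ring

lemma sumD_mem (c : ℤ → k) (le : ℤ → ℤ → Prop) :
    (∑ i ∈ Finset.Icc (1:ℤ) (n:ℤ), c i • (EE k n (-i) (-i) - EE k n i i)) ∈
      gC k n (Set.Icc (1:ℤ) (n:ℤ)) le :=
  Submodule.sum_mem _ fun i hi => Submodule.smul_mem _ _
    (Submodule.subset_span (Or.inl ⟨i, Set.mem_Icc.mpr (Finset.mem_Icc.mp hi), rfl⟩))

lemma sumD_apply (c : ℤ → k) (p q : Iv n) :
    (∑ i ∈ Finset.Icc (1:ℤ) (n:ℤ), c i • (EE k n (-i) (-i) - EE k n i i)) p q =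
      if p = q then (if p.1 < 0 then c (-p.1) else - c p.1) else 0 := by
  rw [Matrix.sum_apply]
  have hp2 := p.2; rw [mem_Idx_iff] at hp2
  by_cases hpq : p = q
  · subst hpq
    rw [if_pos rfl]
    by_cases hsign : p.1 < 0
    · rw [if_pos hsign]
      rw [Finset.sum_eq_single (-p.1)]
      · simp only [Matrix.smul_apply, Matrix.sub_apply, EE, smul_eq_mul, neg_neg]
        split_ifs <;> (first | ring1 | (exfalso; omega) | simp_all)
      · intro i hi hne
        rw [Finset.mem_Icc] at hi
        simp only [Matrix.smul_apply, Matrix.sub_apply, EE, smul_eq_mul]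
        rw [if_neg (by omega), if_neg (by omega)]
        ring
      · intro hmem
        exact absurd (Finset.mem_Icc.mpr (by omega)) hmem
    · rw [if_neg hsign]
      rw [Finset.sum_eq_single p.1]
      · simp only [Matrix.smul_apply, Matrix.sub_apply, EE, smul_eq_mul]
        split_ifs <;> (first | ring1 | (exfalso; omega) | simp_all)
      · intro i hi hne
        rw [Finset.mem_Icc] at hi
        simp only [Matrix.smul_apply, Matrix.sub_apply, EE, smul_eq_mul]
        rw [if_neg (by omega), if_neg (by omega)]
        ring
      · intro hmem
        exact absurd (Finset.mem_Icc.mpr (by omega)) hmem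
  · rw [if_neg hpq]
    refine Finset.sum_eq_zero fun i hi => ?_
    have hne : p.1 ≠ q.1 := fun hh => hpq (Subtype.ext hh)
    simp only [Matrix.smul_apply, Matrix.sub_apply, EE, smul_eq_mul]
    rw [if_neg (by omega), if_neg (by omega)]
    ring

lemma F_EE [DecidableRel P.le]
    (F : Matrix (Iv n) (Iv n) k →ₗ[k] k)
    (hF : ∀ M, F M = ∑ p : Iv n, ∑ q : Iv n,
      if p.1 < 0 ∧ 0 < q.1 ∧ -p.1 ≤ q.1 ∧ P.le p.1 q.1 then M p q else 0)
    {a b : ℤ} (ha : a ∈ Idx n) (hb : b ∈ Idx n) :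
    F (EE k n a b) = if a < 0 ∧ 0 < b ∧ -a ≤ b ∧ P.le a b then 1 else 0 := by
  rw [hF]
  rw [Finset.sum_eq_single (⟨a, ha⟩ : Iv n)]
  · rw [Finset.sum_eq_single (⟨b, hb⟩ : Iv n)]
    · simp [EE]
    · intro q _ hq
      have hqb : q.1 ≠ b := fun hh => hq (Subtype.ext hh)
      simp [EE, hqb]
    · intro hm; exact absurd (Finset.mem_univ _) hm
  · intro p _ hp
    have hpa : p.1 ≠ a := fun hh => hp (Subtype.ext hh)
    refine Finset.sum_eq_zero fun q _ => ?_
    simp [EE, hpa]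
  · intro hm; exact absurd (Finset.mem_univ _) hm

lemma F_X [DecidableRel P.le]
    (F : Matrix (Iv n) (Iv n) k →ₗ[k] k)
    (hF : ∀ M, F M = ∑ p : Iv n, ∑ q : Iv n,
      if p.1 < 0 ∧ 0 < q.1 ∧ -p.1 ≤ q.1 ∧ P.le p.1 q.1 then M p q else 0)
    {a b : ℤ} (ha : a ∈ Idx n) (hb : b ∈ Idx n) (ha0 : 0 < a) (hb0 : 0 < b) (hne : a ≠ b)
    (hab : P.le (-a) b) (hba : P.le (-b) a) :
    F (EE k n (-a) b + EE k n (-b) a) = 1 := by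
  rw [map_add, F_EE F hF (neg_mem_Idx ha) hb, F_EE F hF (neg_mem_Idx hb) ha]
  rcases lt_or_gt_of_ne hne with h | h
  · rw [if_pos ⟨by omega, hb0, by omega, hab⟩,
      if_neg (fun hc => absurd hc.2.2.1 (by omega))]
    norm_num
  · rw [if_neg (fun hc => absurd hc.2.2.1 (by omega)),
      if_pos ⟨by omega, ha0, by omega, hba⟩]
    norm_num

lemma F_Y [DecidableRel P.le]
    (F : Matrix (Iv n) (Iv n) k →ₗ[k] k)
    (hF : ∀ M, F M = ∑ p : Iv n, ∑ q : Iv n,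
      if p.1 < 0 ∧ 0 < q.1 ∧ -p.1 ≤ q.1 ∧ P.le p.1 q.1 then M p q else 0)
    {a : ℤ} (ha : a ∈ Idx n) (ha0 : 0 < a) (hle : P.le (-a) a) :
    F (EE k n (-a) a) = 1 := by
  rw [F_EE F hF (neg_mem_Idx ha) ha, if_pos ⟨by omega, ha0, by omega, hle⟩]

end Aux3
theorem stmt14 (k : Type*) [Field k] (n : ℕ) (P : TypeCPoset n)
    [DecidableRel P.le] (h01 : Height01 P.le)
    (hFrob : lieIndex (gC k n (Set.Icc (1 : ℤ) (n : ℤ)) P.le) = 0)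
    (F : Matrix (Iv n) (Iv n) k →ₗ[k] k)
    (hF : ∀ M, F M = ∑ p : Iv n, ∑ q : Iv n,
      if p.1 < 0 ∧ 0 < q.1 ∧ -p.1 ≤ q.1 ∧ P.le p.1 q.1 then M p q else 0) :
    ∀ x ∈ gC k n (Set.Icc (1 : ℤ) (n : ℤ)) P.le,
      (∀ y ∈ gC k n (Set.Icc (1 : ℤ) (n : ℤ)) P.le, F (x * y - y * x) = 0) → x = 0 := by
  classical
  intro x hx hxy
  have hShx := shape_of_mem h01 hx
  -- membership of generators
  have hXmem : ∀ a b : ℤ, a ∈ Idx n → b ∈ Idx n → 0 < a → 0 < b → a ≠ b → P.le (-a) b →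
      EE k n (-a) b + EE k n (-b) a ∈ gC k n (Set.Icc (1:ℤ) (n:ℤ)) P.le := by
    intro a b ha hb ha0 hb0 hne hle
    have hba : P.le (-b) a := by
      have := (P.symm (-a) b (by omega)).mp hle
      simpa using this
    rw [mem_Idx_iff] at ha hb
    exact Submodule.subset_span (Or.inr (Or.inr (Or.inl
      ⟨a, Set.mem_Icc.mpr (by omega), b, Set.mem_Icc.mpr (by omega), hle, hba, hne, rfl⟩)))
  have hYmem : ∀ a : ℤ, a ∈ Idx n → 0 < a → P.le (-a) a →
      EE k n (-a) a ∈ gC k n (Set.Icc (1:ℤ) (n:ℤ)) P.le := by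
    intro a ha ha0 hle
    rw [mem_Idx_iff] at ha
    exact Submodule.subset_span (Or.inr (Or.inr (Or.inr
      ⟨a, Set.mem_Icc.mpr (by omega), hle, rfl⟩)))
  -- extract a Frobenius functional F' from the index-zero hypothesis
  obtain ⟨F', hFrob'⟩ : ∃ F' : Matrix (Iv n) (Iv n) k →ₗ[k] k,
      ∀ z ∈ gC k n (Set.Icc (1:ℤ) (n:ℤ)) P.le,
        (∀ y ∈ gC k n (Set.Icc (1:ℤ) (n:ℤ)) P.le, F' (z * y - y * z) = 0) → z = 0 := by
    unfold lieIndex at hFrob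
    have hne : {d : ℕ | ∃ G : Matrix (Iv n) (Iv n) k →ₗ[k] k,
        d = Module.finrank k (kerB (gC k n (Set.Icc (1:ℤ) (n:ℤ)) P.le) G)}.Nonempty :=
      ⟨_, 0, rfl⟩
    have h0 : (0:ℕ) ∈ {d : ℕ | ∃ G : Matrix (Iv n) (Iv n) k →ₗ[k] k,
        d = Module.finrank k (kerB (gC k n (Set.Icc (1:ℤ) (n:ℤ)) P.le) G)} := by
      rcases Nat.sInf_eq_zero.mp hFrob with h | h
      · exact h
      · rw [h] at hne
        exact absurd hne Set.not_nonempty_empty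
    obtain ⟨F', hF'⟩ := h0
    have hbot : kerB (gC k n (Set.Icc (1:ℤ) (n:ℤ)) P.le) F' = ⊥ :=
      Submodule.finrank_eq_zero.mp hF'.symm
    refine ⟨F', fun z hz hcom => ?_⟩
    have hmem : z ∈ kerB (gC k n (Set.Icc (1:ℤ) (n:ℤ)) P.le) F' := by
      refine Submodule.mem_inf.mpr ⟨hz, ?_⟩
      refine (Submodule.mem_iInf _).mpr fun y => (Submodule.mem_iInf _).mpr fun hy => ?_
      rw [LinearMap.mem_ker, LinearMap.comp_apply, LinearMap.sub_apply,
        LinearMap.mulRight_apply, LinearMap.mulLeft_apply]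
      exact hcom y hy
    rw [hbot, Submodule.mem_bot] at hmem
    exact hmem
  -- the Kirillov pairing as a bilinear map, restricted to W
  let b2 : Matrix (Iv n) (Iv n) k →ₗ[k] Matrix (Iv n) (Iv n) k →ₗ[k] k :=
    LinearMap.mk₂ k (fun u v => F' (u * v - v * u))
      (fun u1 u2 v => by
        rw [show (u1 + u2) * v - v * (u1 + u2)
            = (u1 * v - v * u1) + (u2 * v - v * u2) by noncomm_ring, map_add])
      (fun c u v => by
        rw [show (c • u) * v - v * (c • u) = c • (u * v - v * u) by
          rw [smul_mul_assoc, mul_smul_comm, smul_sub], map_smul])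
      (fun u v1 v2 => by
        rw [show u * (v1 + v2) - (v1 + v2) * u
            = (u * v1 - v1 * u) + (u * v2 - v2 * u) by noncomm_ring, map_add])
      (fun c u v => by
        rw [show u * (c • v) - (c • v) * u = c • (u * v - v * u) by
          rw [mul_smul_comm, smul_mul_assoc, smul_sub], map_smul])
  let β : ↥(gC k n (Set.Icc (1:ℤ) (n:ℤ)) P.le) →ₗ[k]
      Module.Dual k ↥(gC k n (Set.Icc (1:ℤ) (n:ℤ)) P.le) :=
    b2.domRestrict₁₂ _ _
  have hβ : ∀ u v : ↥(gC k n (Set.Icc (1:ℤ) (n:ℤ)) P.le),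
      β u v = F' ((u : Matrix (Iv n) (Iv n) k) * v - (v : Matrix (Iv n) (Iv n) k) * u) :=
    fun u v => rfl
  have hβinj : Function.Injective β := by
    rw [← LinearMap.ker_eq_bot]
    refine (Submodule.eq_bot_iff _).mpr fun z hz => ?_
    have h0 : (z : Matrix (Iv n) (Iv n) k) = 0 := by
      refine hFrob' z z.2 fun y hy => ?_
      have h1 := LinearMap.congr_fun (LinearMap.mem_ker.mp hz) (⟨y, hy⟩ :
        ↥(gC k n (Set.Icc (1:ℤ) (n:ℤ)) P.le))
      rw [hβ] at h1
      simpa using h1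
    exact Subtype.ext h0
  have hβsurj : Function.Surjective β :=
    (LinearMap.injective_iff_surjective_of_finrank_eq_finrank
      Subspace.dual_finrank_eq.symm).mp hβinj
  -- the key surjectivity consequence
  have hkey : ∀ a0 b0 : ℤ, a0 ∈ Idx n → b0 ∈ Idx n → 0 < a0 → a0 ≤ b0 → P.le (-a0) b0 →
      ∃ d : ℤ → k, ∀ a b : ℤ, a ∈ Idx n → b ∈ Idx n → 0 < a → a ≤ b → P.le (-a) b →
        (d a + d b) * F' (if a = b then EE k n (-a) a else EE k n (-a) b + EE k n (-b) a)
          = if a = a0 ∧ b = b0 then 1 else 0 := by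
    intro a0 b0 pa pb h0a hab0 hle0
    have hev_add : ∀ y1 y2 : ↥(gC k n (Set.Icc (1:ℤ) (n:ℤ)) P.le),
        ((y1 + y2 : ↥(gC k n (Set.Icc (1:ℤ) (n:ℤ)) P.le)) : Matrix (Iv n) (Iv n) k)
          ⟨-a0, neg_mem_Idx pa⟩ ⟨b0, pb⟩
        = (y1 : Matrix (Iv n) (Iv n) k) ⟨-a0, neg_mem_Idx pa⟩ ⟨b0, pb⟩
          + (y2 : Matrix (Iv n) (Iv n) k) ⟨-a0, neg_mem_Idx pa⟩ ⟨b0, pb⟩ := fun y1 y2 => rfl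
    obtain ⟨z, hzev⟩ := hβsurj
      { toFun := fun y => (y : Matrix (Iv n) (Iv n) k) ⟨-a0, neg_mem_Idx pa⟩ ⟨b0, pb⟩
        map_add' := hev_add
        map_smul' := fun cc y => rfl }
    have hSz := shape_of_mem h01 z.2
    set d : ℤ → k := fun i =>
      if h : -i ∈ Idx n then (z : Matrix (Iv n) (Iv n) k) ⟨-i, h⟩ ⟨-i, h⟩ else 0 with hd
    refine ⟨d, ?_⟩
    intro a b ha hb ha0 hab hle
    have hda : d a = (z : Matrix (Iv n) (Iv n) k) ⟨-a, neg_mem_Idx ha⟩ ⟨-a, neg_mem_Idx ha⟩ := by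
      simp only [hd]; exact dif_pos _
    have hdb : d b = (z : Matrix (Iv n) (Iv n) k) ⟨-b, neg_mem_Idx hb⟩ ⟨-b, neg_mem_Idx hb⟩ := by
      simp only [hd]; exact dif_pos _
    by_cases hid : a = b
    · subst hid
      rw [if_pos rfl]
      have hmem := hYmem a ha ha0 hle
      have happ := LinearMap.congr_fun hzev
        (⟨EE k n (-a) a, hmem⟩ : ↥(gC k n (Set.Icc (1:ℤ) (n:ℤ)) P.le))
      rw [hβ] at happ
      rw [show ((⟨EE k n (-a) a, hmem⟩ : ↥(gC k n (Set.Icc (1:ℤ) (n:ℤ)) P.le)) :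
        Matrix (Iv n) (Iv n) k) = EE k n (-a) a from rfl] at happ
      rw [bracket_Y_eq h01 hSz ha ha0, map_smul, smul_eq_mul] at happ
      rw [hda]
      rw [happ]
      show EE k n (-a) a ⟨-a0, neg_mem_Idx pa⟩ ⟨b0, pb⟩ = _
      simp only [EE]
      split_ifs <;> first | (exfalso; omega) | rfl
    · have hmem := hXmem a b ha hb ha0 (by omega) hid hle
      rw [if_neg hid]
      have happ := LinearMap.congr_fun hzev
        (⟨EE k n (-a) b + EE k n (-b) a, hmem⟩ : ↥(gC k n (Set.Icc (1:ℤ) (n:ℤ)) P.le))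
      rw [hβ] at happ
      rw [show ((⟨EE k n (-a) b + EE k n (-b) a, hmem⟩ :
        ↥(gC k n (Set.Icc (1:ℤ) (n:ℤ)) P.le)) : Matrix (Iv n) (Iv n) k)
        = EE k n (-a) b + EE k n (-b) a from rfl] at happ
      rw [bracket_X_eq h01 hSz ha hb ha0 (by omega) hid, map_smul, smul_eq_mul] at happ
      rw [hda, hdb]
      rw [happ]
      show (EE k n (-a) b + EE k n (-b) a) ⟨-a0, neg_mem_Idx pa⟩ ⟨b0, pb⟩ = _
      rw [Matrix.add_apply]
      simp only [EE]
      split_ifs <;> first | (exfalso; omega) | norm_num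
  -- the vanishing of the diagonal coefficients (Step I)
  set c : ℤ → k := fun i =>
    if h : -i ∈ Idx n then x ⟨-i, h⟩ ⟨-i, h⟩ else 0 with hc
  have hcE : ∀ a b : ℤ, a ∈ Idx n → b ∈ Idx n → 0 < a → 0 < b → a ≠ b → P.le (-a) b →
      c a + c b = 0 := by
    intro a b ha hb ha0 hb0 hne hle
    have hba : P.le (-b) a := by
      have := (P.symm (-a) b (by omega)).mp hle
      simpa using this
    have h1 := hxy _ (hXmem a b ha hb ha0 hb0 hne hle)
    rw [bracket_X_eq h01 hShx ha hb ha0 hb0 hne, map_smul, smul_eq_mul,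
      F_X F hF ha hb ha0 hb0 hne hle hba, mul_one] at h1
    have hca : c a = x ⟨-a, neg_mem_Idx ha⟩ ⟨-a, neg_mem_Idx ha⟩ := by
      simp only [hc]; exact dif_pos _
    have hcb : c b = x ⟨-b, neg_mem_Idx hb⟩ ⟨-b, neg_mem_Idx hb⟩ := by
      simp only [hc]; exact dif_pos _
    rw [hca, hcb]
    exact h1
  have hcY : ∀ a : ℤ, a ∈ Idx n → 0 < a → P.le (-a) a → c a + c a = 0 := by
    intro a ha ha0 hle
    have h1 := hxy _ (hYmem a ha ha0 hle)
    rw [bracket_Y_eq h01 hShx ha ha0, map_smul, smul_eq_mul,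
      F_Y F hF ha ha0 hle, mul_one] at h1
    have hca : c a = x ⟨-a, neg_mem_Idx ha⟩ ⟨-a, neg_mem_Idx ha⟩ := by
      simp only [hc]; exact dif_pos _
    rw [hca]
    exact h1
  have hz1 : ∀ i : ℤ, 0 < i → ∀ hi : -i ∈ Idx n, x ⟨-i, hi⟩ ⟨-i, hi⟩ = 0 := by
    set z1 := ∑ i ∈ Finset.Icc (1:ℤ) (n:ℤ), c i • (EE k n (-i) (-i) - EE k n i i)
      with hz1def
    have hcomm : ∀ y ∈ gC k n (Set.Icc (1:ℤ) (n:ℤ)) P.le, F' (z1 * y - y * z1) = 0 := by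
      intro y hy
      have hSy := shape_of_mem h01 hy
      have hzero : z1 * y - y * z1 = 0 := by
        have hdiagz1 : ∀ p q : Iv n, p ≠ q → z1 p q = 0 := fun p q hpq => by
          rw [hz1def, sumD_apply, if_neg hpq]
        ext p q
        have h2 : (z1 * y - y * z1) p q = - (y p q * (z1 q q - z1 p p)) := by
          rw [← diag_bracket_apply y z1 hdiagz1 p q]
          simp only [Matrix.sub_apply]
          ring
        rw [h2, Matrix.zero_apply]
        by_cases hyle : P.le p.1 q.1
        case neg => rw [hSy.nle p q hyle]; ring
        by_cases hpq : p = q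
        · subst hpq; rw [sub_self, mul_zero, neg_zero]
        · obtain ⟨hp, hq⟩ := le_sign h01 hyle (fun hh => hpq (Subtype.ext hh))
          have e1 : z1 q q = - c q.1 := by
            rw [hz1def, sumD_apply, if_pos rfl, if_neg (by omega : ¬ q.1 < 0)]
          have e2 : z1 p p = c (-p.1) := by
            rw [hz1def, sumD_apply, if_pos rfl, if_pos hp]
          rw [e1, e2]
          by_cases hloop : p.1 = -q.1
          · have hs : c q.1 + c q.1 = 0 := by
              refine hcY q.1 q.2 hq ?_
              rw [← hloop]; exact hyle
            rw [show -p.1 = q.1 by omega]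
            linear_combination (y p q) * hs
          · have hs : c (-p.1) + c q.1 = 0 := by
              refine hcE (-p.1) q.1 (neg_mem_Idx p.2) q.2 (by omega) hq (by omega) ?_
              rw [neg_neg]; exact hyle
            linear_combination (y p q) * hs
      rw [hzero, map_zero]
    have hz1zero : z1 = 0 := hFrob' z1 (sumD_mem c P.le) hcomm
    intro i hi0 hi
    have hval := congrFun (congrFun hz1zero ⟨-i, hi⟩) ⟨-i, hi⟩
    rw [hz1def] at hval
    rw [sumD_apply, Matrix.zero_apply] at hval
    rw [if_pos rfl, if_pos (show ((⟨-i, hi⟩ : Iv n)).1 < 0 by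
      show -i < 0; omega)] at hval
    have hci : c i = 0 := by
      rw [show c i = c (-((⟨-i, hi⟩ : Iv n)).1) by norm_num]
      exact hval
    have hcix : c i = x ⟨-i, hi⟩ ⟨-i, hi⟩ := by
      simp only [hc]; exact dif_pos _
    rw [← hcix]
    exact hci
  -- the vanishing of the off-diagonal entries (Step III)
  have hoff : ∀ p q : Iv n, p.1 < 0 → 0 < q.1 → -p.1 ≤ q.1 → P.le p.1 q.1 → x p q = 0 := by
    intro p q hp hq hpq hle
    obtain ⟨d, hd⟩ := hkey (-p.1) q.1 (neg_mem_Idx p.2) q.2 (by omega) hpq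
      (by rw [neg_neg]; exact hle)
    have hgnz : ∀ a b : ℤ, a ∈ Idx n → b ∈ Idx n → 0 < a → a ≤ b → P.le (-a) b →
        F' (if a = b then EE k n (-a) a else EE k n (-a) b + EE k n (-b) a) ≠ 0 := by
      intro a b ha hb ha0 hab hle'
      obtain ⟨d', hd'⟩ := hkey a b ha hb ha0 hab hle'
      have h1 := hd' a b ha hb ha0 hab hle'
      rw [if_pos (show a = a ∧ b = b from ⟨rfl, rfl⟩)] at h1
      intro hg
      rw [hg, mul_zero] at h1
      exact zero_ne_one h1
    have hdzero : ∀ a b : ℤ, a ∈ Idx n → b ∈ Idx n → 0 < a → a ≤ b → P.le (-a) b →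
        ¬(a = -p.1 ∧ b = q.1) → d a + d b = 0 := by
      intro a b ha hb ha0 hab hle' hne
      have h1 := hd a b ha hb ha0 hab hle'
      rw [if_neg hne] at h1
      rcases mul_eq_zero.mp h1 with h | h
      · exact h
      · exact absurd h (hgnz a b ha hb ha0 hab hle')
    have hdnz : d (-p.1) + d q.1 ≠ 0 := by
      have h1 := hd (-p.1) q.1 (neg_mem_Idx p.2) q.2 (by omega) hpq
        (by rw [neg_neg]; exact hle)
      rw [if_pos (show -p.1 = -p.1 ∧ q.1 = q.1 from ⟨rfl, rfl⟩)] at h1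
      intro h0
      rw [h0, zero_mul] at h1
      exact zero_ne_one h1
    set zd := ∑ i ∈ Finset.Icc (1:ℤ) (n:ℤ), d i • (EE k n (-i) (-i) - EE k n i i)
      with hzddef
    have hzdd : ∀ p' q' : Iv n, p' ≠ q' → zd p' q' = 0 := fun p' q' hne => by
      rw [hzddef, sumD_apply, if_neg hne]
    have h2 := hxy zd (sumD_mem d P.le)
    rw [hF] at h2
    have hg0 : ∀ p' q' : Iv n, ¬(p' = p ∧ q' = q) →
        (if p'.1 < 0 ∧ 0 < q'.1 ∧ -p'.1 ≤ q'.1 ∧ P.le p'.1 q'.1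
          then (x * zd - zd * x) p' q' else 0) = 0 := by
      intro p' q' hne
      split_ifs with hcnd
      · obtain ⟨h1', h2', h3', h4'⟩ := hcnd
        rw [diag_bracket_apply x zd hzdd p' q']
        have e1 : zd q' q' = - d q'.1 := by
          rw [hzddef, sumD_apply, if_pos rfl, if_neg (by omega : ¬ q'.1 < 0)]
        have e2 : zd p' p' = d (-p'.1) := by
          rw [hzddef, sumD_apply, if_pos rfl, if_pos h1']
        rw [e1, e2]
        have hsum : d (-p'.1) + d q'.1 = 0 := by
          refine hdzero (-p'.1) q'.1 (neg_mem_Idx p'.2) q'.2 (by omega) h3'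
            (by rw [neg_neg]; exact h4') ?_
          rintro ⟨ha', hb'⟩
          exact hne ⟨Subtype.ext (by omega), Subtype.ext hb'⟩
        linear_combination (-(x p' q')) * hsum
      · rfl
    rw [Finset.sum_eq_single p
      (fun p' _ hp' => Finset.sum_eq_zero fun q' _ => hg0 p' q' fun hh => hp' hh.1)
      (fun hm => absurd (Finset.mem_univ _) hm)] at h2
    rw [Finset.sum_eq_single q
      (fun q' _ hq' => hg0 p q' fun hh => hq' hh.2)
      (fun hm => absurd (Finset.mem_univ _) hm)] at h2
    rw [if_pos ⟨hp, hq, hpq, hle⟩, diag_bracket_apply x zd hzdd p q] at h2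
    have e1 : zd q q = - d q.1 := by
      rw [hzddef, sumD_apply, if_pos rfl, if_neg (by omega : ¬ q.1 < 0)]
    have e2 : zd p p = d (-p.1) := by
      rw [hzddef, sumD_apply, if_pos rfl, if_pos hp]
    rw [e1, e2] at h2
    rcases mul_eq_zero.mp h2 with h | h
    · exact h
    · exfalso
      apply hdnz
      linear_combination -h
  -- conclusion: all entries of x vanish
  ext p q
  rw [Matrix.zero_apply]
  by_cases hle : P.le p.1 q.1
  case neg => exact hShx.nle p q hle
  by_cases hpq : p = q
  · subst hpq
    have hp0 : p.1 ≠ 0 := by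
      have := p.2; rw [mem_Idx_iff] at this; exact this.1
    rcases lt_or_gt_of_ne hp0 with hsgn | hsgn
    · have pf : -(-p.1) ∈ Idx n := by rw [neg_neg]; exact p.2
      have hval := hz1 (-p.1) (by omega) pf
      rwa [show (⟨-(-p.1), pf⟩ : Iv n) = p from Subtype.ext (neg_neg _)] at hval
    · have pf : -p.1 ∈ Idx n := neg_mem_Idx p.2
      rw [hShx.diag p hsgn]
      have hval := hz1 p.1 hsgn pf
      rw [show nIv p = (⟨-p.1, pf⟩ : Iv n) from rfl, hval, neg_zero]
  · have hsg := le_sign h01 hle (fun hh => hpq (Subtype.ext hh))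
    by_cases hrange : -p.1 ≤ q.1
    · exact hoff p q hsg.1 hsg.2 hrange hle
    · have hne2 : p.1 ≠ -q.1 := by omega
      rw [hShx.symm2 p q hsg.1 hsg.2 hne2]
      refine hoff (nIv q) (nIv p) ?_ ?_ ?_ ?_
      · show -q.1 < 0; omega
      · show 0 < -p.1; omega
      · show -(-q.1) ≤ -p.1; omega
      · show P.le (-q.1) (-p.1); exact (P.symm p.1 q.1 hne2).mp hle
end
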